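/- Let m, n₂, n₃ be positive integers and let T : Fin (m+1) → Fin n₂ → Fin n₃ → ℝ be a tensor of real rank exactly r. Write M_i for the i-th slice of T, the n₂×n₃ real matrix with entries (M_i)_{jk} = T i j k, and suppose the last slice M_m is nonzero. Then there exist real constants λ₀, ..., λ_{m−1} such that the tensor T' : Fin m → Fin n₂ → Fin n₃ → ℝ defined by T' i j k = T i j k − λ_i · T m j k has real rank at most r − 1. Moreover, if the matrix M_m has matrix rank one, then T' has real rank exactly r − 1. -/

import Mathlib

/-- The rank of an `n₁ × n₂ × n₃` tensor over `ℝ`. -/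
noncomputable def rank3 {n₁ n₂ n₃ : ℕ} (T : Fin n₁ → Fin n₂ → Fin n₃ → ℝ) : ℕ :=
  sInf {r : ℕ | ∃ (u : Fin r → Fin n₁ → ℝ) (v : Fin r → Fin n₂ → ℝ)
    (w : Fin r → Fin n₃ → ℝ), ∀ i j k, T i j k = ∑ s, u s i * v s j * w s k}

lemma decomp_nonempty {n₁ n₂ n₃ : ℕ} (T : Fin n₁ → Fin n₂ → Fin n₃ → ℝ) :
    {r : ℕ | ∃ (u : Fin r → Fin n₁ → ℝ) (v : Fin r → Fin n₂ → ℝ)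
      (w : Fin r → Fin n₃ → ℝ), ∀ i j k, T i j k = ∑ s, u s i * v s j * w s k}.Nonempty := by
  classical
  refine ⟨Fintype.card (Fin n₁ × Fin n₂ × Fin n₃), ?_⟩
  set e := (Fintype.equivFin (Fin n₁ × Fin n₂ × Fin n₃)).symm with he
  refine ⟨fun s i => if (e s).1 = i then T (e s).1 (e s).2.1 (e s).2.2 else 0,
    fun s j => if (e s).2.1 = j then 1 else 0,
    fun s k => if (e s).2.2 = k then 1 else 0, ?_⟩
  intro i j k
  have key : ∀ p : Fin n₁ × Fin n₂ × Fin n₃,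
      (if p.1 = i then T p.1 p.2.1 p.2.2 else 0) * (if p.2.1 = j then 1 else 0) *
        (if p.2.2 = k then 1 else 0) = if p = (i, j, k) then T i j k else 0 := by
    rintro ⟨a, b, c⟩
    by_cases h1 : a = i <;> by_cases h2 : b = j <;> by_cases h3 : c = k <;>
      simp [h1, h2, h3, Prod.ext_iff]
  calc T i j k
      = ∑ p : Fin n₁ × Fin n₂ × Fin n₃, if p = (i, j, k) then T i j k else 0 := by
        rw [Finset.sum_ite_eq' Finset.univ ((i, j, k) : Fin n₁ × Fin n₂ × Fin n₃)]
        simp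
    _ = ∑ s, (if (e s).1 = i then T (e s).1 (e s).2.1 (e s).2.2 else 0) *
          (if (e s).2.1 = j then 1 else 0) * (if (e s).2.2 = k then 1 else 0) := by
        rw [← Equiv.sum_comp e (fun p : Fin n₁ × Fin n₂ × Fin n₃ =>
          if p = (i, j, k) then T i j k else 0)]
        exact Finset.sum_congr rfl fun s _ => (key (e s)).symm

lemma rank3_spec {n₁ n₂ n₃ r : ℕ} (T : Fin n₁ → Fin n₂ → Fin n₃ → ℝ) (h : rank3 T = r) :
    ∃ (u : Fin r → Fin n₁ → ℝ) (v : Fin r → Fin n₂ → ℝ)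
      (w : Fin r → Fin n₃ → ℝ), ∀ i j k, T i j k = ∑ s, u s i * v s j * w s k := by
  subst h
  exact Nat.sInf_mem (decomp_nonempty T)

lemma rank3_le {n₁ n₂ n₃ r : ℕ} {T : Fin n₁ → Fin n₂ → Fin n₃ → ℝ}
    (u : Fin r → Fin n₁ → ℝ) (v : Fin r → Fin n₂ → ℝ) (w : Fin r → Fin n₃ → ℝ)
    (h : ∀ i j k, T i j k = ∑ s, u s i * v s j * w s k) : rank3 T ≤ r :=
  Nat.sInf_le ⟨u, v, w, h⟩

lemma rank_one_decomp {n₂ n₃ : ℕ} (A : Matrix (Fin n₂) (Fin n₃) ℝ) (h : A.rank = 1) :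
    ∃ (a : Fin n₂ → ℝ) (b : Fin n₃ → ℝ), ∀ j k, A j k = a j * b k := by
  rw [Matrix.rank_eq_finrank_span_cols] at h
  obtain ⟨v0, hv0, hall⟩ := finrank_eq_one_iff'.mp h
  choose c hc using fun k : Fin n₃ =>
    hall ⟨A.transpose k, Submodule.subset_span (Set.mem_range_self k)⟩
  refine ⟨(v0 : Fin n₂ → ℝ), c, fun j k => ?_⟩
  have := congrArg (fun x : Submodule.span ℝ (Set.range A.transpose) => (x : Fin n₂ → ℝ) j) (hc k)
  simp only [Submodule.coe_smul, Pi.smul_apply, smul_eq_mul, Matrix.transpose_apply] at this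
  rw [← this, mul_comm]

/-- The substitution method over `ℝ`: subtracting suitable real multiples of a nonzero
last slice from the other slices lowers the real rank by at least one; exactly one if the
last slice has rank one. -/
theorem real_substitution_method (m n₂ n₃ r : ℕ) (hm : 0 < m) (hn₂ : 0 < n₂)
    (hn₃ : 0 < n₃) (T : Fin (m + 1) → Fin n₂ → Fin n₃ → ℝ)
    (hrank : rank3 T = r)
    (hlast : (fun j k => T (Fin.last m) j k) ≠ 0) :
    ∃ lam : Fin m → ℝ,
      rank3 (fun i j k => T i.castSucc j k - lam i * T (Fin.last m) j k) ≤ r - 1 ∧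
      ((Matrix.of fun j k => T (Fin.last m) j k).rank = 1 →
        rank3 (fun i j k => T i.castSucc j k - lam i * T (Fin.last m) j k) = r - 1) := by
  classical
  obtain ⟨u, v, w, hT⟩ := rank3_spec T hrank
  -- find a term with nonzero coefficient at the last slice
  have hex : ∃ s : Fin r, u s (Fin.last m) ≠ 0 := by
    by_contra hcon
    push_neg at hcon
    apply hlast
    funext j k
    rw [hT]
    simp [hcon]
  obtain ⟨s₀, hu0⟩ := hex
  obtain ⟨r', rfl⟩ : ∃ r', r = r' + 1 := ⟨r - 1, (Nat.succ_pred_eq_of_pos s₀.pos).symm⟩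
  set lam : Fin m → ℝ := fun i => u s₀ i.castSucc / u s₀ (Fin.last m) with hlam
  -- the decomposition of the reduced tensor
  have hT' : ∀ i j k, (T i.castSucc j k - lam i * T (Fin.last m) j k) =
      ∑ t : Fin r', (u (s₀.succAbove t) i.castSucc - lam i * u (s₀.succAbove t) (Fin.last m)) *
        v (s₀.succAbove t) j * w (s₀.succAbove t) k := by
    intro i j k
    have step : (T i.castSucc j k - lam i * T (Fin.last m) j k) =
        ∑ s : Fin (r' + 1), (u s i.castSucc - lam i * u s (Fin.last m)) * v s j * w s k := by
      rw [hT, hT, Finset.mul_sum, ← Finset.sum_sub_distrib]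
      exact Finset.sum_congr rfl fun s _ => by ring
    rw [step, Fin.sum_univ_succAbove _ s₀]
    have hz : u s₀ i.castSucc - lam i * u s₀ (Fin.last m) = 0 := by
      rw [hlam]
      field_simp
      ring
    rw [hz, zero_mul, zero_mul, zero_add]
  have hle : rank3 (fun i j k => T i.castSucc j k - lam i * T (Fin.last m) j k) ≤ r' :=
    rank3_le _ _ _ hT'
  refine ⟨lam, by simpa using hle, fun hone => ?_⟩
  -- lower bound in the rank-one case
  obtain ⟨a, b, hab⟩ := rank_one_decomp _ hone
  simp only [Matrix.of_apply] at hab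
  set q := rank3 (fun i j k => T i.castSucc j k - lam i * T (Fin.last m) j k) with hq
  obtain ⟨u2, v2, w2, h2⟩ := rank3_spec
    (fun i j k => T i.castSucc j k - lam i * T (Fin.last m) j k) hq.symm
  -- reconstruct T with q + 1 terms
  have hrec : ∀ i j k, T i j k =
      ∑ s : Fin (q + 1), (Fin.snoc (fun t => Fin.snoc (u2 t) 0) (Fin.snoc lam 1) : Fin (q+1) → Fin (m+1) → ℝ) s i *
        (Fin.snoc v2 a : Fin (q+1) → Fin n₂ → ℝ) s j *
        (Fin.snoc w2 b : Fin (q+1) → Fin n₃ → ℝ) s k := by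
    intro i j k
    rw [Fin.sum_univ_castSucc]
    simp only [Fin.snoc_castSucc, Fin.snoc_last]
    induction i using Fin.lastCases with
    | last =>
      simp only [Fin.snoc_last]
      rw [hab j k]
      simp
    | cast i =>
      simp only [Fin.snoc_castSucc]
      have this : T i.castSucc j k - lam i * T (Fin.last m) j k =
          ∑ s : Fin q, u2 s i * v2 s j * w2 s k := h2 i j k
      have habT : T (Fin.last m) j k = a j * b k := hab j k
      calc T i.castSucc j k
          = (T i.castSucc j k - lam i * T (Fin.last m) j k) + lam i * (a j * b k) := by
            rw [← habT]; ring
        _ = (∑ t : Fin q, u2 t i * v2 t j * w2 t k) + lam i * a j * b k := by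
            rw [this]; ring
  have hge : rank3 T ≤ q + 1 := rank3_le _ _ _ hrec
  rw [hrank] at hge
  have : r' ≤ q := by omega
  simpa using le_antisymm hle this
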